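/- Let r ≥ 1, let 0 < p < 1, and let 𝒫 be a hereditary property of r-graphs such that 𝒫ⁿ is nonempty for every n. For each n define c_n by Pr[G(n,p) ∈ 𝒫ⁿ] = 2^{-c_n · C(n,r)}. Then the sequence (c_n) is nondecreasing in n. -/

import Mathlib

open Finset

/-- The set of all potential edges of an `r`-uniform hypergraph on vertex set `Fin n`:
the `r`-element subsets of the vertex set. -/
def edgeUniv (r n : ℕ) : Finset (Finset (Fin n)) := Finset.powersetCard r Finset.univ

/-- `G` is an `r`-uniform hypergraph on `Fin n`: a set of `r`-element subsets of the vertices. -/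
def IsRGraph (r n : ℕ) (G : Finset (Finset (Fin n))) : Prop := G ⊆ edgeUniv r n

/-- The probability that the random `r`-graph `G(n,p)` (each `r`-set being an edge
independently with probability `p`) belongs to the collection `A`. -/
noncomputable def prG (r n : ℕ) (p : ℝ) (A : Set (Finset (Finset (Fin n)))) : ℝ :=
  ∑ E ∈ (edgeUniv r n).powerset,
    Set.indicator A (fun E => p ^ E.card * (1 - p) ^ ((edgeUniv r n).card - E.card)) E

/-- The `r`-graph `F` on `Fin k` appears as an induced subgraph of `G` (an `r`-graph on
`Fin n`) on the vertex subset `U`. -/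
def IsInducedCopyAt (r k n : ℕ) (F : Finset (Finset (Fin k)))
    (G : Finset (Finset (Fin n))) (U : Finset (Fin n)) : Prop :=
  ∃ f : Fin k ↪ Fin n, Finset.univ.map f = U ∧
    ∀ e : Finset (Fin k), e.card = r → (e ∈ F ↔ e.map f ∈ G)

/-- `G` has an induced subgraph on the vertex subset `U` isomorphic to a member of the
family `Fam` (where `Fam k` is the set of members of the family on `k` vertices). -/
def HasCopyAt (r n : ℕ) (Fam : ∀ k, Set (Finset (Finset (Fin k))))
    (G : Finset (Finset (Fin n))) (U : Finset (Fin n)) : Prop :=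
  ∃ k, ∃ H ∈ Fam k, IsInducedCopyAt r k n H G U

/-- `Forb(Fam)ⁿ` : the `r`-graphs on `n` vertices with no induced subgraph isomorphic to a
member of `Fam`. -/
def ForbN (r : ℕ) (Fam : ∀ k, Set (Finset (Finset (Fin k)))) (n : ℕ) :
    Set (Finset (Finset (Fin n))) :=
  {G | IsRGraph r n G ∧ ∀ U, ¬ HasCopyAt r n Fam G U}

/-- A partial Steiner system with parameters `(r,m,n)`: a collection of `m`-element
subsets of `Fin n` such that every `r`-element subset is contained in at most one member. -/
def IsSteiner (r m n : ℕ) (D : Finset (Finset (Fin n))) : Prop :=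
  (∀ B ∈ D, B.card = m) ∧
  ∀ e : Finset (Fin n), e.card = r →
    ∀ B₁ ∈ D, ∀ B₂ ∈ D, e ⊆ B₁ → e ⊆ B₂ → B₁ = B₂


set_option linter.unusedSectionVars false
set_option linter.unreachableTactic false
set_option linter.unusedTactic false


open Finset

section Mu
variable {ι : Type*} [DecidableEq ι]

/-- product measure of a family of subsets of ground set `E`. -/
noncomputable def muBT (p q : ℝ) (E : Finset ι) (A : Finset (Finset ι)) : ℝ :=
  ∑ S ∈ A, p ^ S.card * q ^ (E.card - S.card)

lemma muBT_nonneg {p q : ℝ} (hp : 0 ≤ p) (hq : 0 ≤ q) (E : Finset ι)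
    (A : Finset (Finset ι)) : 0 ≤ muBT p q E A :=
  Finset.sum_nonneg fun _ _ => mul_nonneg (pow_nonneg hp _) (pow_nonneg hq _)

lemma muBT_mono {p q : ℝ} (hp : 0 ≤ p) (hq : 0 ≤ q) (E : Finset ι)
    {A B : Finset (Finset ι)} (h : A ⊆ B) : muBT p q E A ≤ muBT p q E B :=
  Finset.sum_le_sum_of_subset_of_nonneg h
    (fun _ _ _ => mul_nonneg (pow_nonneg hp _) (pow_nonneg hq _))

lemma muBT_slice (p q : ℝ) {E : Finset ι} {x : ι} (hx : x ∈ E)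
    {A : Finset (Finset ι)} (hA : ∀ S ∈ A, S ⊆ E) :
    muBT p q E A =
      p * muBT p q (E.erase x) ((A.filter (fun S => x ∈ S)).image (fun S => S.erase x)) +
      q * muBT p q (E.erase x) (A.filter (fun S => x ∉ S)) := by
  have hcardE : E.card = (E.erase x).card + 1 := by
    rw [Finset.card_erase_of_mem hx]
    have : 1 ≤ E.card := Finset.card_pos.2 ⟨x, hx⟩
    omega
  rw [muBT, ← Finset.sum_filter_add_sum_filter_not A (fun S => x ∈ S)]
  congr 1
  · rw [muBT, Finset.mul_sum, Finset.sum_image]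
    · apply Finset.sum_congr rfl
      intro S hS
      simp only [Finset.mem_filter] at hS
      have hxS : x ∈ S := hS.2
      have hcardS : S.card = (S.erase x).card + 1 := by
        rw [Finset.card_erase_of_mem hxS]
        have : 1 ≤ S.card := Finset.card_pos.2 ⟨x, hxS⟩
        omega
      have hSE : S.card ≤ E.card := Finset.card_le_card (hA S hS.1)
      rw [hcardS, hcardE]
      have h1 : (E.erase x).card + 1 - ((S.erase x).card + 1) = (E.erase x).card - (S.erase x).card := by omega
      rw [h1, pow_succ]
      ring
    · intro S hS S' hS' hSS'
      simp only [Finset.mem_coe, Finset.mem_filter] at hS hS' hSS'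
      rw [← Finset.insert_erase hS.2, ← Finset.insert_erase hS'.2, hSS']
  · rw [muBT, Finset.mul_sum]
    apply Finset.sum_congr rfl
    intro S hS
    simp only [Finset.mem_filter] at hS
    have hSE' : S ⊆ E.erase x := Finset.subset_erase.2 ⟨hA S hS.1, hS.2⟩
    have : S.card ≤ (E.erase x).card := Finset.card_le_card hSE'
    rw [hcardE]
    have h1 : (E.erase x).card + 1 - S.card = ((E.erase x).card - S.card) + 1 := by omega
    rw [h1, pow_succ]
    ring

end Mu


open Finset

section Numeric
variable {κ : Type*}

/-- superadditivity of the geometric mean. -/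
lemma geomBT_superadd (s : Finset κ) (k : ℕ) (hk : 1 ≤ k) (hcard : s.card = k)
    (a b : κ → ℝ) (ha : ∀ j ∈ s, 0 ≤ a j) (hb : ∀ j ∈ s, 0 ≤ b j) :
    (∏ j ∈ s, a j) ^ ((k : ℝ)⁻¹) + (∏ j ∈ s, b j) ^ ((k : ℝ)⁻¹) ≤
      (∏ j ∈ s, (a j + b j)) ^ ((k : ℝ)⁻¹) := by
  have hkR : ((k : ℝ)⁻¹) ≠ 0 := by positivity
  by_cases h0 : ∃ j ∈ s, a j + b j = 0
  · obtain ⟨j, hjs, hj⟩ := h0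
    have haj : a j = 0 := le_antisymm (by nlinarith [ha j hjs, hb j hjs]) (ha j hjs)
    have hbj : b j = 0 := by nlinarith [ha j hjs, hb j hjs]
    rw [Finset.prod_eq_zero hjs haj, Finset.prod_eq_zero hjs hbj, Real.zero_rpow hkR]
    simp only [add_zero]
    exact Real.rpow_nonneg (Finset.prod_nonneg fun i hi => by
      nlinarith [ha i hi, hb i hi]) _
  · push_neg at h0
    have hpos : ∀ j ∈ s, 0 < a j + b j := fun j hj =>
      lt_of_le_of_ne (by nlinarith [ha j hj, hb j hj]) (Ne.symm (h0 j hj))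
    have hSpos : 0 < ∏ j ∈ s, (a j + b j) := Finset.prod_pos hpos
    -- weighted AM-GM for u_j = a j / (a j + b j)
    have hw : ∑ _j ∈ s, (k : ℝ)⁻¹ = 1 := by
      rw [Finset.sum_const, hcard, nsmul_eq_mul]
      field_simp
    have key : ∀ f : κ → ℝ, (∀ j ∈ s, 0 ≤ f j) → (∀ j ∈ s, f j ≤ a j + b j) →
        (∏ j ∈ s, f j) ^ ((k : ℝ)⁻¹) ≤
          (∑ j ∈ s, (k : ℝ)⁻¹ * (f j / (a j + b j))) * (∏ j ∈ s, (a j + b j)) ^ ((k : ℝ)⁻¹) := by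
      intro f hf hfab
      have h1 : (∏ j ∈ s, f j) = ∏ j ∈ s, (f j / (a j + b j)) * (a j + b j) := by
        apply Finset.prod_congr rfl
        intro j hj
        rw [div_mul_cancel₀]
        exact (hpos j hj).ne'
      rw [h1, Finset.prod_mul_distrib, Real.mul_rpow
        (Finset.prod_nonneg fun j hj => div_nonneg (hf j hj) (hpos j hj).le)
        hSpos.le]
      apply mul_le_mul_of_nonneg_right _ (Real.rpow_nonneg hSpos.le _)
      rw [← Real.finset_prod_rpow s _ (fun j hj => div_nonneg (hf j hj) (hpos j hj).le)]
      exact Real.geom_mean_le_arith_mean_weighted s _ _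
        (fun j _ => by positivity)
        hw (fun j hj => div_nonneg (hf j hj) (hpos j hj).le)
    have h1 := key a ha (fun j hj => by nlinarith [hb j hj])
    have h2 := key b hb (fun j hj => by nlinarith [ha j hj])
    have hsum : (∑ j ∈ s, (k : ℝ)⁻¹ * (a j / (a j + b j))) +
        (∑ j ∈ s, (k : ℝ)⁻¹ * (b j / (a j + b j))) = 1 := by
      rw [← Finset.sum_add_distrib, ← hw]
      apply Finset.sum_congr rfl
      intro j hj
      rw [← mul_add, ← add_div, div_self (hpos j hj).ne']
      ring
    calc (∏ j ∈ s, a j) ^ ((k : ℝ)⁻¹) + (∏ j ∈ s, b j) ^ ((k : ℝ)⁻¹)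
        ≤ ((∑ j ∈ s, (k : ℝ)⁻¹ * (a j / (a j + b j))) +
           (∑ j ∈ s, (k : ℝ)⁻¹ * (b j / (a j + b j)))) * (∏ j ∈ s, (a j + b j)) ^ ((k : ℝ)⁻¹) := by
          rw [add_mul]; exact add_le_add h1 h2
      _ = (∏ j ∈ s, (a j + b j)) ^ ((k : ℝ)⁻¹) := by rw [hsum, one_mul]

lemma numericBT (s : Finset κ) (k : ℕ) (hk : 1 ≤ k) (hcard : s.card = k)
    (a b : κ → ℝ) (ha : ∀ j ∈ s, 0 ≤ a j) (hb : ∀ j ∈ s, 0 ≤ b j)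
    {C α β p q : ℝ} (hC : 0 ≤ C) (hα0 : 0 ≤ α) (hβ0 : 0 ≤ β) (hp : 0 ≤ p) (hq : 0 ≤ q)
    (hα : α ^ k ≤ C * ∏ j ∈ s, a j) (hβ : β ^ k ≤ C * ∏ j ∈ s, b j) :
    (p * α + q * β) ^ k ≤ C * ∏ j ∈ s, (p * a j + q * b j) := by
  have hk0 : k ≠ 0 := by omega
  rcases hC.eq_or_lt with hC0 | hCpos
  · have h1 : α = 0 := by
      have : α ^ k ≤ 0 := by rw [← hC0] at hα; simpa using hα
      have h2 : α ^ k = 0 := le_antisymm this (pow_nonneg hα0 k)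
      exact pow_eq_zero_iff hk0 |>.1 h2
    have h2 : β = 0 := by
      have : β ^ k ≤ 0 := by rw [← hC0] at hβ; simpa using hβ
      have h2 : β ^ k = 0 := le_antisymm this (pow_nonneg hβ0 k)
      exact pow_eq_zero_iff hk0 |>.1 h2
    rw [h1, h2, ← hC0]
    simp [zero_pow hk0]
  · -- main case
    have hprodA : 0 ≤ ∏ j ∈ s, a j := Finset.prod_nonneg ha
    have hprodB : 0 ≤ ∏ j ∈ s, b j := Finset.prod_nonneg hb
    have hαle : α ≤ (C * ∏ j ∈ s, a j) ^ ((k : ℝ)⁻¹) := by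
      have := Real.rpow_le_rpow (pow_nonneg hα0 k) hα (by positivity : (0:ℝ) ≤ (k : ℝ)⁻¹)
      rwa [← Real.rpow_natCast α k, ← Real.rpow_mul hα0,
        mul_inv_cancel₀ (by exact_mod_cast hk0 : (k:ℝ) ≠ 0), Real.rpow_one] at this
    have hβle : β ≤ (C * ∏ j ∈ s, b j) ^ ((k : ℝ)⁻¹) := by
      have := Real.rpow_le_rpow (pow_nonneg hβ0 k) hβ (by positivity : (0:ℝ) ≤ (k : ℝ)⁻¹)
      rwa [← Real.rpow_natCast β k, ← Real.rpow_mul hβ0,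
        mul_inv_cancel₀ (by exact_mod_cast hk0 : (k:ℝ) ≠ 0), Real.rpow_one] at this
    -- prod (p * a j) = p^k * prod a
    have hpa : ∏ j ∈ s, (p * a j) = p ^ k * ∏ j ∈ s, a j := by
      rw [Finset.prod_mul_distrib, Finset.prod_const, hcard]
    have hqb : ∏ j ∈ s, (q * b j) = q ^ k * ∏ j ∈ s, b j := by
      rw [Finset.prod_mul_distrib, Finset.prod_const, hcard]
    have hsup := geomBT_superadd s k hk hcard (fun j => p * a j) (fun j => q * b j)
      (fun j hj => mul_nonneg hp (ha j hj)) (fun j hj => mul_nonneg hq (hb j hj))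
    rw [hpa, hqb] at hsup
    have hpk : (p ^ k * ∏ j ∈ s, a j) ^ ((k : ℝ)⁻¹) = p * (∏ j ∈ s, a j) ^ ((k : ℝ)⁻¹) := by
      rw [Real.mul_rpow (pow_nonneg hp k) hprodA, ← Real.rpow_natCast p k,
        ← Real.rpow_mul hp, mul_inv_cancel₀ (by exact_mod_cast hk0 : (k:ℝ) ≠ 0), Real.rpow_one]
    have hqk : (q ^ k * ∏ j ∈ s, b j) ^ ((k : ℝ)⁻¹) = q * (∏ j ∈ s, b j) ^ ((k : ℝ)⁻¹) := by
      rw [Real.mul_rpow (pow_nonneg hq k) hprodB, ← Real.rpow_natCast q k,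
        ← Real.rpow_mul hq, mul_inv_cancel₀ (by exact_mod_cast hk0 : (k:ℝ) ≠ 0), Real.rpow_one]
    rw [hpk, hqk] at hsup
    have hmain : p * α + q * β ≤ (C * ∏ j ∈ s, (p * a j + q * b j)) ^ ((k : ℝ)⁻¹) := by
      have hCrw : ∀ X : ℝ, 0 ≤ X → (C * X) ^ ((k : ℝ)⁻¹) = C ^ ((k : ℝ)⁻¹) * X ^ ((k : ℝ)⁻¹) :=
        fun X hX => Real.mul_rpow hCpos.le hX
      calc p * α + q * β
          ≤ p * (C * ∏ j ∈ s, a j) ^ ((k : ℝ)⁻¹) + q * (C * ∏ j ∈ s, b j) ^ ((k : ℝ)⁻¹) := by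
            gcongr
        _ = C ^ ((k : ℝ)⁻¹) * (p * (∏ j ∈ s, a j) ^ ((k : ℝ)⁻¹) +
              q * (∏ j ∈ s, b j) ^ ((k : ℝ)⁻¹)) := by
            rw [hCrw _ hprodA, hCrw _ hprodB]; ring
        _ ≤ C ^ ((k : ℝ)⁻¹) * (∏ j ∈ s, (p * a j + q * b j)) ^ ((k : ℝ)⁻¹) := by
            apply mul_le_mul_of_nonneg_left hsup (Real.rpow_nonneg hCpos.le _)
        _ = (C * ∏ j ∈ s, (p * a j + q * b j)) ^ ((k : ℝ)⁻¹) := by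
            rw [hCrw _ (Finset.prod_nonneg fun j hj =>
              add_nonneg (mul_nonneg hp (ha j hj)) (mul_nonneg hq (hb j hj)))]
    have hRHS : 0 ≤ C * ∏ j ∈ s, (p * a j + q * b j) :=
      mul_nonneg hCpos.le (Finset.prod_nonneg fun j hj =>
        add_nonneg (mul_nonneg hp (ha j hj)) (mul_nonneg hq (hb j hj)))
    calc (p * α + q * β) ^ k
        ≤ ((C * ∏ j ∈ s, (p * a j + q * b j)) ^ ((k : ℝ)⁻¹)) ^ k := by
          apply pow_le_pow_left₀ (by positivity) hmain
      _ = C * ∏ j ∈ s, (p * a j + q * b j) := Real.rpow_inv_natCast_pow hRHS hk0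

end Numeric

section Cover
open Finset
variable {ι κ : Type*} [DecidableEq ι] [DecidableEq κ]

lemma coverBT (p q : ℝ) (hp : 0 ≤ p) (hq : 0 ≤ q) (k : ℕ) (hk : 1 ≤ k) (s : Finset κ)
    (E : Finset ι) :
    ∀ T : κ → Finset ι, (∀ j ∈ s, T j ⊆ E) →
      (∀ x ∈ E, (s.filter (fun j => x ∈ T j)).card = k) →
      ∀ A : Finset (Finset ι), (∀ S ∈ A, S ⊆ E) →
      (muBT p q E A) ^ k ≤ ∏ j ∈ s, muBT p q (T j) (A.image (· ∩ T j)) := by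
  induction E using Finset.strongInduction with
  | _ E IH =>
  intro T hT hcov A hA
  have hk0 : k ≠ 0 := by omega
  rcases A.eq_empty_or_nonempty with rfl | hAne
  · rw [muBT]
    simp only [Finset.sum_empty, zero_pow hk0]
    exact Finset.prod_nonneg fun j _ => muBT_nonneg hp hq _ _
  rcases E.eq_empty_or_nonempty with rfl | ⟨x, hx⟩
  · have hA1 : A = {∅} := by
      apply Finset.eq_singleton_iff_nonempty_unique_mem.2
      exact ⟨hAne, fun S hS => Finset.subset_empty.1 (hA S hS)⟩
    subst hA1
    have hT0 : ∀ j ∈ s, T j = ∅ := fun j hj => Finset.subset_empty.1 (hT j hj)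
    have : ∀ j ∈ s, muBT p q (T j) (({∅} : Finset (Finset ι)).image (· ∩ T j)) = 1 := by
      intro j hj
      rw [hT0 j hj]
      simp [muBT]
    rw [Finset.prod_congr rfl this]
    simp [muBT]
  · -- inductive step
    set E' := E.erase x with hE'
    have hE'ss : E' ⊂ E := Finset.erase_ssubset hx
    set Ain := (A.filter (fun S => x ∈ S)).image (fun S => S.erase x) with hAin
    set Aout := A.filter (fun S => x ∉ S) with hAout
    have hslice := muBT_slice p q hx hA
    set T' := fun j => (T j).erase x with hT'def
    have hT'sub : ∀ j ∈ s, T' j ⊆ E' := fun j hj => Finset.erase_subset_erase x (hT j hj)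
    have hcov' : ∀ y ∈ E', (s.filter (fun j => y ∈ T' j)).card = k := by
      intro y hy
      have hyE : y ∈ E := Finset.mem_of_mem_erase hy
      have hyx : y ≠ x := Finset.ne_of_mem_erase hy
      rw [← hcov y hyE]
      congr 1
      apply Finset.filter_congr
      intro j _
      simp [hT'def, Finset.mem_erase, hyx]
    have hAinsub : ∀ S ∈ Ain, S ⊆ E' := by
      intro S hS
      simp only [hAin, Finset.mem_image, Finset.mem_filter] at hS
      obtain ⟨S₀, ⟨hS₀A, _⟩, rfl⟩ := hS
      exact Finset.erase_subset_erase x (hA S₀ hS₀A)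
    have hAoutsub : ∀ S ∈ Aout, S ⊆ E' := by
      intro S hS
      simp only [hAout, Finset.mem_filter] at hS
      exact Finset.subset_erase.2 ⟨hA S hS.1, hS.2⟩
    have IHin := IH E' hE'ss T' hT'sub hcov' Ain hAinsub
    have IHout := IH E' hE'ss T' hT'sub hcov' Aout hAoutsub
    set a : κ → ℝ := fun j => muBT p q (T' j) (Ain.image (· ∩ T' j)) with hadef
    set b : κ → ℝ := fun j => muBT p q (T' j) (Aout.image (· ∩ T' j)) with hbdef
    set cc : κ → ℝ := fun j => muBT p q (T j) (A.image (· ∩ T j)) with hccdef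
    have ha0 : ∀ j ∈ s, 0 ≤ a j := fun j _ => muBT_nonneg hp hq _ _
    have hb0 : ∀ j ∈ s, 0 ≤ b j := fun j _ => muBT_nonneg hp hq _ _
    have hc0 : ∀ j ∈ s, 0 ≤ cc j := fun j _ => muBT_nonneg hp hq _ _
    -- out-vertices: a j ≤ cc j and b j ≤ cc j
    have hout : ∀ j ∈ s, x ∉ T j → a j ≤ cc j ∧ b j ≤ cc j := by
      intro j hj hxT
      have hTj : T' j = T j := Finset.erase_eq_of_notMem hxT
      simp only [hadef, hbdef, hccdef, hTj]
      constructor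
      · apply muBT_mono hp hq
        intro X hX
        simp only [Finset.mem_image, hAin, Finset.mem_filter] at hX ⊢
        obtain ⟨Y, ⟨S₀, ⟨hS₀, hxS₀⟩, rfl⟩, rfl⟩ := hX
        refine ⟨S₀, hS₀, ?_⟩
        have hE : S₀.erase x ∩ T j = S₀ ∩ T j := by
          rw [Finset.erase_inter]
          exact Finset.erase_eq_of_notMem (fun h => hxT (Finset.mem_of_mem_inter_right h))
        rw [hE]
      · apply muBT_mono hp hq
        exact Finset.image_subset_image (Finset.filter_subset _ _)
    -- in-vertices
    have hin : ∀ j ∈ s, x ∈ T j → p * a j + q * b j ≤ cc j := by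
      intro j hj hxT
      have hBsub : ∀ X ∈ A.image (· ∩ T j), X ⊆ T j := by
        intro X hX
        simp only [Finset.mem_image] at hX
        obtain ⟨S, _, rfl⟩ := hX
        exact Finset.inter_subset_right
      have hslicej := muBT_slice p q hxT hBsub
      rw [hccdef]
      simp only []
      rw [hslicej]
      have h1 : Ain.image (· ∩ T' j) ⊆
          ((A.image (· ∩ T j)).filter (fun S => x ∈ S)).image (fun S => S.erase x) := by
        intro X hX
        simp only [Finset.mem_image, hAin, hT'def, Finset.mem_filter] at hX ⊢
        obtain ⟨Y, ⟨S₀, ⟨hS₀, hxS₀⟩, rfl⟩, rfl⟩ := hX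
        refine ⟨S₀ ∩ T j, ⟨⟨S₀, hS₀, rfl⟩, Finset.mem_inter.2 ⟨hxS₀, hxT⟩⟩, ?_⟩
        rw [Finset.erase_inter, Finset.inter_erase, Finset.erase_idem]
      have h2 : Aout.image (· ∩ T' j) ⊆ (A.image (· ∩ T j)).filter (fun S => x ∉ S) := by
        intro X hX
        simp only [Finset.mem_image, hAout, hT'def, Finset.mem_filter] at hX ⊢
        obtain ⟨S₀, ⟨hS₀, hxS₀⟩, rfl⟩ := hX
        have hE : S₀ ∩ (T j).erase x = S₀ ∩ T j := by
          rw [Finset.inter_erase]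
          exact Finset.erase_eq_of_notMem (fun h => hxS₀ (Finset.mem_of_mem_inter_left h))
        refine ⟨⟨S₀, hS₀, hE.symm⟩, ?_⟩
        rw [hE]
        exact fun h => hxS₀ (Finset.mem_of_mem_inter_left h)
      have := muBT_mono hp hq ((T j).erase x) h1
      have := muBT_mono hp hq ((T j).erase x) h2
      gcongr <;> assumption
    -- combine
    rw [hslice]
    set α := muBT p q E' Ain
    set β := muBT p q E' Aout
    have hsplit : ∏ j ∈ s, cc j =
        (∏ j ∈ s.filter (fun j => x ∈ T j), cc j) *
        (∏ j ∈ s.filter (fun j => ¬ x ∈ T j), cc j) :=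
      (Finset.prod_filter_mul_prod_filter_not s _ _).symm
    set C := ∏ j ∈ s.filter (fun j => ¬ x ∈ T j), cc j with hCdef
    have hC0 : 0 ≤ C := Finset.prod_nonneg fun j hj => hc0 j (Finset.mem_filter.1 hj).1
    have hαk : α ^ k ≤ C * ∏ j ∈ s.filter (fun j => x ∈ T j), a j := by
      calc α ^ k ≤ ∏ j ∈ s, a j := IHin
        _ = (∏ j ∈ s.filter (fun j => x ∈ T j), a j) *
            (∏ j ∈ s.filter (fun j => ¬ x ∈ T j), a j) :=
          (Finset.prod_filter_mul_prod_filter_not s _ _).symm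
        _ ≤ (∏ j ∈ s.filter (fun j => x ∈ T j), a j) * C := by
          apply mul_le_mul_of_nonneg_left _ (Finset.prod_nonneg fun j hj =>
            ha0 j (Finset.mem_filter.1 hj).1)
          apply Finset.prod_le_prod (fun j hj => ha0 j (Finset.mem_filter.1 hj).1)
          intro j hj
          obtain ⟨hjs, hjx⟩ := Finset.mem_filter.1 hj
          exact (hout j hjs hjx).1
        _ = C * ∏ j ∈ s.filter (fun j => x ∈ T j), a j := mul_comm _ _
    have hβk : β ^ k ≤ C * ∏ j ∈ s.filter (fun j => x ∈ T j), b j := by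
      calc β ^ k ≤ ∏ j ∈ s, b j := IHout
        _ = (∏ j ∈ s.filter (fun j => x ∈ T j), b j) *
            (∏ j ∈ s.filter (fun j => ¬ x ∈ T j), b j) :=
          (Finset.prod_filter_mul_prod_filter_not s _ _).symm
        _ ≤ (∏ j ∈ s.filter (fun j => x ∈ T j), b j) * C := by
          apply mul_le_mul_of_nonneg_left _ (Finset.prod_nonneg fun j hj =>
            hb0 j (Finset.mem_filter.1 hj).1)
          apply Finset.prod_le_prod (fun j hj => hb0 j (Finset.mem_filter.1 hj).1)
          intro j hj
          obtain ⟨hjs, hjx⟩ := Finset.mem_filter.1 hj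
          exact (hout j hjs hjx).2
        _ = C * ∏ j ∈ s.filter (fun j => x ∈ T j), b j := mul_comm _ _
    have hnum := numericBT (s.filter (fun j => x ∈ T j)) k hk (hcov x hx)
      a b (fun j hj => ha0 j (Finset.mem_filter.1 hj).1)
      (fun j hj => hb0 j (Finset.mem_filter.1 hj).1)
      hC0 (muBT_nonneg hp hq _ _) (muBT_nonneg hp hq _ _) hp hq hαk hβk
    calc (p * α + q * β) ^ k
        ≤ C * ∏ j ∈ s.filter (fun j => x ∈ T j), (p * a j + q * b j) := hnum
      _ ≤ C * ∏ j ∈ s.filter (fun j => x ∈ T j), cc j := by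
          apply mul_le_mul_of_nonneg_left _ hC0
          apply Finset.prod_le_prod (fun j hj =>
            add_nonneg (mul_nonneg hp (ha0 j (Finset.mem_filter.1 hj).1))
              (mul_nonneg hq (hb0 j (Finset.mem_filter.1 hj).1)))
          intro j hj
          obtain ⟨hjs, hjx⟩ := Finset.mem_filter.1 hj
          exact hin j hjs hjx
      _ = ∏ j ∈ s, cc j := by rw [hsplit, mul_comm]

end Cover

section Graph
open Finset

noncomputable def famBT (r n : ℕ) (A : Set (Finset (Finset (Fin n)))) :
    Finset (Finset (Finset (Fin n))) :=
  @Finset.filter _ (· ∈ A) (Classical.decPred _) (edgeUniv r n).powerset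
lemma prG_eq (r n : ℕ) (p : ℝ) (A : Set (Finset (Finset (Fin n)))) :
    prG r n p A = muBT p (1 - p) (edgeUniv r n) (famBT r n A) := by
  classical
  rw [prG, muBT, famBT, Finset.sum_filter]
  exact Finset.sum_congr rfl fun E _ => by rw [Set.indicator_apply]

lemma card_edgeUniv (r n : ℕ) : (edgeUniv r n).card = n.choose r := by
  rw [edgeUniv, Finset.card_powersetCard, Finset.card_univ, Fintype.card_fin]

lemma mem_edgeUniv {r n : ℕ} {e : Finset (Fin n)} : e ∈ edgeUniv r n ↔ e.card = r := by
  simp [edgeUniv, Finset.mem_powersetCard, Finset.subset_univ]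

set_option maxHeartbeats 1000000
variable {r n : ℕ} {p : ℝ}

lemma vertexBT (hp : 0 ≤ p) (hq : 0 ≤ 1 - p)
    (P : ∀ m, Set (Finset (Finset (Fin m))))
    (hPhered : ∀ m, ∀ G ∈ P m, ∀ (k : ℕ) (H : Finset (Finset (Fin k))) (U : Finset (Fin m)),
      IsRGraph r k H → IsInducedCopyAt r k m H G U → H ∈ P k)
    (v : Fin (n + 1)) :
    muBT p (1 - p) ((edgeUniv r (n + 1)).filter (fun e => v ∉ e))
        ((famBT r (n + 1) (P (n + 1))).image (· ∩ (edgeUniv r (n + 1)).filter (fun e => v ∉ e)))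
      ≤ muBT p (1 - p) (edgeUniv r n) (famBT r n (P n)) := by
  classical
  set Tv := (edgeUniv r (n + 1)).filter (fun e => v ∉ e) with hTv
  have hginj : Function.Injective (fun e : Finset (Fin n) => e.map v.succAboveEmb) :=
    fun e₁ e₂ h => Finset.map_injective v.succAboveEmb h
  have hgim : (edgeUniv r n).image (fun e => e.map v.succAboveEmb) = Tv := by
    ext d
    simp only [Finset.mem_image, hTv, Finset.mem_filter, mem_edgeUniv]
    constructor
    · rintro ⟨e, he, rfl⟩
      refine ⟨by simp [Finset.card_map, he], ?_⟩
      simp only [Finset.mem_map]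
      rintro ⟨i, _, hi⟩
      exact Fin.succAbove_ne v i (by exact hi)
    · rintro ⟨hd, hvd⟩
      have hsub : d ⊆ Finset.univ.map v.succAboveEmb := by
        intro w hw
        have hwv : w ≠ v := fun h => hvd (h ▸ hw)
        obtain ⟨i, hi⟩ := Fin.exists_succAbove_eq hwv
        exact Finset.mem_map.2 ⟨i, Finset.mem_univ i, hi⟩
      obtain ⟨u, _, rfl⟩ := Finset.subset_map_iff.1 hsub
      exact ⟨u, by rwa [Finset.card_map] at hd, rfl⟩
  have hTvcard : Tv.card = (edgeUniv r n).card := by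
    rw [← hgim, Finset.card_image_of_injective _ hginj]
  set ψ : Finset (Finset (Fin (n + 1))) → Finset (Finset (Fin n)) :=
    fun X => (edgeUniv r n).filter (fun e => e.map v.succAboveEmb ∈ X) with hψ
  set B := (famBT r (n + 1) (P (n + 1))).image (· ∩ Tv) with hB
  have him : ∀ X ∈ B, (ψ X).image (fun e => e.map v.succAboveEmb) = X := by
    intro X hX
    simp only [hB, Finset.mem_image] at hX
    obtain ⟨S, hS, rfl⟩ := hX
    ext y
    simp only [Finset.mem_image, hψ, Finset.mem_filter]
    constructor
    · rintro ⟨e, ⟨_, hgE⟩, rfl⟩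
      exact hgE
    · intro hy
      have hyTv : y ∈ Tv := Finset.mem_of_mem_inter_right hy
      rw [← hgim] at hyTv
      obtain ⟨e, he, rfl⟩ := Finset.mem_image.1 hyTv
      exact ⟨e, ⟨he, hy⟩, rfl⟩
  have hcard : ∀ X ∈ B, (ψ X).card = X.card := by
    intro X hX
    calc (ψ X).card = ((ψ X).image (fun e => e.map v.succAboveEmb)).card :=
          (Finset.card_image_of_injective _ hginj).symm
      _ = X.card := by rw [him X hX]
  have hmem : ∀ X ∈ B, ψ X ∈ famBT r n (P n) := by
    intro X hX
    simp only [hB, Finset.mem_image] at hX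
    obtain ⟨S, hS, rfl⟩ := hX
    have hSP : S ∈ P (n + 1) := by
      rw [famBT, Finset.mem_filter] at hS
      exact hS.2
    rw [famBT, Finset.mem_filter]
    refine ⟨Finset.mem_powerset.2 (Finset.filter_subset _ _), ?_⟩
    apply hPhered (n + 1) S hSP n (ψ (S ∩ Tv)) (Finset.univ.map v.succAboveEmb)
      (Finset.filter_subset _ _)
    refine ⟨v.succAboveEmb, rfl, ?_⟩
    intro e he
    have heU : e ∈ edgeUniv r n := mem_edgeUniv.2 he
    have hgTv : e.map v.succAboveEmb ∈ Tv := by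
      rw [← hgim]
      exact Finset.mem_image.2 ⟨e, heU, rfl⟩
    simp only [hψ, Finset.mem_filter, Finset.mem_inter]
    constructor
    · rintro ⟨_, hgS, _⟩
      exact hgS
    · intro hgS
      exact ⟨heU, hgS, hgTv⟩
  have hinj : Set.InjOn ψ B := by
    intro X₁ h₁ X₂ h₂ h
    rw [← him X₁ h₁, ← him X₂ h₂, h]
  calc muBT p (1 - p) Tv B
      = ∑ X ∈ B, p ^ (ψ X).card * (1 - p) ^ ((edgeUniv r n).card - (ψ X).card) := by
        rw [muBT]
        apply Finset.sum_congr rfl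
        intro X hX
        rw [hcard X hX, hTvcard]
    _ = ∑ Y ∈ B.image ψ, p ^ Y.card * (1 - p) ^ ((edgeUniv r n).card - Y.card) := by
        rw [Finset.sum_image (fun X hX X' hX' h => hinj hX hX' h)]
    _ ≤ muBT p (1 - p) (edgeUniv r n) (famBT r n (P n)) := by
        apply muBT_mono hp hq
        intro Y hY
        obtain ⟨X, hX, rfl⟩ := Finset.mem_image.1 hY
        exact hmem X hX


section Assemble
open Finset

lemma stepBT (r n : ℕ) (hrn : r ≤ n) (p : ℝ) (hp : 0 ≤ p) (hq : 0 ≤ 1 - p)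
    (P : ∀ m, Set (Finset (Finset (Fin m))))
    (hPhered : ∀ m, ∀ G ∈ P m, ∀ (k : ℕ) (H : Finset (Finset (Fin k))) (U : Finset (Fin m)),
      IsRGraph r k H → IsInducedCopyAt r k m H G U → H ∈ P k) :
    prG r (n + 1) p (P (n + 1)) ^ (n + 1 - r) ≤ prG r n p (P n) ^ (n + 1) := by
  classical
  rw [prG_eq, prG_eq]
  have hk : 1 ≤ n + 1 - r := by omega
  have hcov : ∀ e ∈ edgeUniv r (n + 1),
      ((Finset.univ : Finset (Fin (n + 1))).filter
        (fun v => e ∈ (edgeUniv r (n + 1)).filter (fun e => v ∉ e))).card = n + 1 - r := by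
    intro e he
    have hec : e.card = r := mem_edgeUniv.1 he
    have heq : (Finset.univ : Finset (Fin (n + 1))).filter
        (fun v => e ∈ (edgeUniv r (n + 1)).filter (fun e => v ∉ e)) = eᶜ := by
      ext v
      simp [Finset.mem_filter, Finset.mem_compl, he]
    rw [heq, Finset.card_compl, hec, Fintype.card_fin]
  have hsub : ∀ S ∈ famBT r (n + 1) (P (n + 1)), S ⊆ edgeUniv r (n + 1) := by
    intro S hS
    rw [famBT, Finset.mem_filter, Finset.mem_powerset] at hS
    exact hS.1
  have hcover := coverBT p (1 - p) hp hq (n + 1 - r) hk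
    (Finset.univ : Finset (Fin (n + 1))) (edgeUniv r (n + 1))
    (fun v => (edgeUniv r (n + 1)).filter (fun e => v ∉ e))
    (fun v _ => Finset.filter_subset _ _) hcov
    (famBT r (n + 1) (P (n + 1))) hsub
  calc muBT p (1 - p) (edgeUniv r (n + 1)) (famBT r (n + 1) (P (n + 1))) ^ (n + 1 - r)
      ≤ ∏ v : Fin (n + 1), muBT p (1 - p) ((edgeUniv r (n + 1)).filter (fun e => v ∉ e))
          ((famBT r (n + 1) (P (n + 1))).image
            (· ∩ (edgeUniv r (n + 1)).filter (fun e => v ∉ e))) := hcover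
    _ ≤ ∏ _v : Fin (n + 1), muBT p (1 - p) (edgeUniv r n) (famBT r n (P n)) := by
        apply Finset.prod_le_prod (fun v _ => muBT_nonneg hp hq _ _)
        intro v _
        exact vertexBT hp hq P hPhered v
    _ = muBT p (1 - p) (edgeUniv r n) (famBT r n (P n)) ^ (n + 1) := by
        rw [Finset.prod_const, Finset.card_univ, Fintype.card_fin]

end Assemble



/-- **Bollobás–Thomason.** For a hereditary property `P` of `r`-graphs with `Pⁿ` nonempty
for every `n`, defining `c_n` by `Pr[G(n,p) ∈ Pⁿ] = 2 ^ (-c_n * C(n,r))`, the sequence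
`c_n` is nondecreasing (for `n ≥ r`, where `c_n` is determined by the defining equation). -/
theorem stmt_1 (r : ℕ) (hr : 1 ≤ r) (p : ℝ) (hp0 : 0 < p) (hp1 : p < 1)
    (P : ∀ n, Set (Finset (Finset (Fin n))))
    (hPgraph : ∀ n, ∀ G ∈ P n, IsRGraph r n G)
    (hPhered : ∀ n, ∀ G ∈ P n, ∀ (k : ℕ) (H : Finset (Finset (Fin k))) (U : Finset (Fin n)),
      IsRGraph r k H → IsInducedCopyAt r k n H G U → H ∈ P k)
    (hPne : ∀ n, (P n).Nonempty)
    (c : ℕ → ℝ)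
    (hc : ∀ n, prG r n p (P n) = 2 ^ (-(c n) * (n.choose r : ℝ))) :
    ∀ a b : ℕ, r ≤ a → a ≤ b → c a ≤ c b := by
  have hp : 0 ≤ p := hp0.le
  have hq : 0 ≤ 1 - p := by linarith
  have hstep : ∀ n, r ≤ n → c n ≤ c (n + 1) := by
    intro n hrn
    have h := stepBT r n hrn p hp hq P hPhered
    rw [hc n, hc (n + 1)] at h
    have h2 : ((2 : ℝ) ^ (-(c (n + 1)) * (((n + 1).choose r : ℕ) : ℝ))) ^ (n + 1 - r) =
        (2 : ℝ) ^ ((-(c (n + 1)) * (((n + 1).choose r : ℕ) : ℝ)) * (((n + 1 - r : ℕ)) : ℝ)) := by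
      rw [← Real.rpow_natCast ((2 : ℝ) ^ (-(c (n + 1)) * (((n + 1).choose r : ℕ) : ℝ))) (n + 1 - r),
        ← Real.rpow_mul (by norm_num : (0:ℝ) ≤ 2)]
    have h3 : ((2 : ℝ) ^ (-(c n) * ((n.choose r : ℕ) : ℝ))) ^ (n + 1) =
        (2 : ℝ) ^ ((-(c n) * ((n.choose r : ℕ) : ℝ)) * (((n + 1 : ℕ)) : ℝ)) := by
      rw [← Real.rpow_natCast ((2 : ℝ) ^ (-(c n) * ((n.choose r : ℕ) : ℝ))) (n + 1),
        ← Real.rpow_mul (by norm_num : (0:ℝ) ≤ 2)]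
    rw [h2, h3] at h
    have h4 := (Real.rpow_le_rpow_left_iff (by norm_num : (1:ℝ) < 2)).1 h
    have hnat : (n + 1).choose r * (n + 1 - r) = n.choose r * (n + 1) :=
      (Nat.choose_mul_succ_eq n r).symm
    have hid : (((n + 1).choose r : ℕ) : ℝ) * (((n + 1 - r : ℕ)) : ℝ) =
        ((n.choose r : ℕ) : ℝ) * (((n + 1 : ℕ)) : ℝ) := by
      exact_mod_cast hnat
    rw [mul_assoc, mul_assoc, hid] at h4
    have hD : (0 : ℝ) < ((n.choose r : ℕ) : ℝ) * (((n + 1 : ℕ)) : ℝ) := by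
      have h5 : (0 : ℝ) < ((n.choose r : ℕ) : ℝ) := by
        exact_mod_cast Nat.choose_pos hrn
      have h6 : (0 : ℝ) < (((n + 1 : ℕ)) : ℝ) := by positivity
      exact mul_pos h5 h6
    have h7 := (mul_le_mul_iff_of_pos_right hD).1 h4
    linarith
  intro a b hra hab
  induction b, hab using Nat.le_induction with
  | base => exact le_refl _
  | succ m hm ih => exact ih.trans (hstep m (hra.trans hm))
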